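/- Let q be a prime power and label each covering edge X ⋖ Y of the subspace lattice B_n(q) by the unique element of f(A(Y)) \ f(A(X)), where f(A(Z)) is the set of rightmost-nonzero-coordinate indices occurring among nonzero vectors of Z. Then in every closed interval [X, Y] of B_n(q) there is exactly one maximal chain whose sequence of labels is strictly increasing. -/

import Mathlib

/-- `i` is the index of the rightmost nonzero coordinate of the vector `x`. -/
def RightmostIdx {F : Type*} [Field F] {n : ℕ} (x : Fin n → F) (i : Fin n) : Prop :=
  x i ≠ 0 ∧ ∀ j : Fin n, i < j → x j = 0

/-- `f(A(X))`: the set of indices arising as the rightmost nonzero coordinate of some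
nonzero vector of the subspace `X` (equivalently, of a basis vector of a line in `X`). -/
def fSet {F : Type*} [Field F] {n : ℕ} (X : Submodule F (Fin n → F)) : Set (Fin n) :=
  {i | ∃ x ∈ X, RightmostIdx x i}

namespace Aux

open scoped Classical

set_option synthInstance.maxHeartbeats 400000
set_option maxHeartbeats 800000

variable {F : Type*} [Field F] {n : ℕ}

/-- Vectors supported on coordinates `< m`. -/
def U (F : Type*) [Field F] (n m : ℕ) : Submodule F (Fin n → F) where
  carrier := {x | ∀ j : Fin n, m ≤ (j : ℕ) → x j = 0}
  add_mem' := fun ha hb j hj => by simp [ha j hj, hb j hj]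
  zero_mem' := fun j _ => rfl
  smul_mem' := fun c a ha j hj => by simp [ha j hj]

lemma mem_U {m : ℕ} {x : Fin n → F} : x ∈ U F n m ↔ ∀ j : Fin n, m ≤ (j:ℕ) → x j = 0 :=
  Iff.rfl

lemma U_mono {m m' : ℕ} (h : m ≤ m') : U F n m ≤ U F n m' :=
  fun _ hx j hj => hx j (le_trans h hj)

lemma U_zero : U F n 0 = ⊥ := by
  ext x
  simp [mem_U, Submodule.mem_bot, funext_iff]

lemma U_top {m : ℕ} (h : n ≤ m) : U F n m = ⊤ := by
  ext x
  simp only [mem_U, Submodule.mem_top, iff_true]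
  intro j hj
  exact absurd (lt_of_lt_of_le j.isLt (le_trans h hj)) (lt_irrefl _)

lemma fSet_mono {X Y : Submodule F (Fin n → F)} (h : X ≤ Y) : fSet X ⊆ fSet Y :=
  fun _ ⟨x, hx, hr⟩ => ⟨x, h hx, hr⟩

lemma sub_field_eq_top {p : Submodule F F} {x : F} (hx : x ∈ p) (h0 : x ≠ 0) : p = ⊤ := by
  rw [eq_top_iff]
  intro y _
  have : y = (y * x⁻¹) • x := by rw [smul_eq_mul, mul_assoc, inv_mul_cancel₀ h0, mul_one]
  rw [this]
  exact p.smul_mem _ hx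

lemma finrank_step (Z : Submodule F (Fin n → F)) (m : ℕ) (hm : m < n) :
    Module.finrank F ↥(Z ⊓ U F n (m+1)) =
      Module.finrank F ↥(Z ⊓ U F n m) +
        (if (⟨m, hm⟩ : Fin n) ∈ fSet Z then 1 else 0) := by
  set i : Fin n := ⟨m, hm⟩ with hi
  set W : Submodule F (Fin n → F) := Z ⊓ U F n (m+1) with hW
  set φ : W →ₗ[F] F := (LinearMap.proj i).comp W.subtype with hφ
  have hle : Z ⊓ U F n m ≤ W := inf_le_inf_left Z (U_mono (Nat.le_succ m))
  have hker : LinearMap.ker φ = (Z ⊓ U F n m).comap W.subtype := by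
    ext v
    simp only [LinearMap.mem_ker, hφ, LinearMap.comp_apply, Submodule.mem_comap,
      Submodule.subtype_apply, LinearMap.proj_apply, Submodule.mem_inf]
    have hv : (v : Fin n → F) ∈ Z ∧ (v : Fin n → F) ∈ U F n (m+1) :=
      Submodule.mem_inf.mp v.2
    constructor
    · intro h0
      refine ⟨hv.1, fun j hj => ?_⟩
      rcases eq_or_lt_of_le hj with heq | hlt
      · have : j = i := Fin.ext heq.symm
        rwa [this]
      · exact hv.2 j hlt
    · intro hv'
      exact hv'.2 i (le_refl m)
  have hker_rank : Module.finrank F ↥(LinearMap.ker φ) = Module.finrank F ↥(Z ⊓ U F n m) := by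
    rw [hker]
    exact (Submodule.comapSubtypeEquivOfLe hle).finrank_eq
  have hrn := LinearMap.finrank_range_add_finrank_ker φ
  by_cases hmem : i ∈ fSet Z
  · obtain ⟨x, hxZ, hxr⟩ := hmem
    have hxW : x ∈ W := by
      refine Submodule.mem_inf.mpr ⟨hxZ, fun j hj => hxr.2 j ?_⟩
      exact Fin.lt_def.mpr (by simpa [hi] using hj)
    have hrange : LinearMap.range φ = ⊤ := by
      refine sub_field_eq_top (x := x i) ⟨⟨x, hxW⟩, rfl⟩ hxr.1
    rw [if_pos ⟨x, hxZ, hxr⟩]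
    rw [hrange] at hrn
    rw [finrank_top] at hrn
    rw [Module.finrank_self] at hrn
    omega
  · have hrange : LinearMap.range φ = ⊥ := by
      rw [LinearMap.range_eq_bot]
      ext v
      simp only [LinearMap.zero_apply, hφ, LinearMap.comp_apply, Submodule.subtype_apply,
        LinearMap.proj_apply]
      by_contra h0
      have hv : (v : Fin n → F) ∈ Z ∧ (v : Fin n → F) ∈ U F n (m+1) :=
        Submodule.mem_inf.mp v.2
      exact hmem ⟨v, hv.1, h0, fun j hj => hv.2 j (Fin.lt_def.mp hj)⟩
    rw [if_neg hmem]
    rw [hrange, finrank_bot] at hrn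
    omega

lemma finrank_inf_U (Z : Submodule F (Fin n → F)) (m : ℕ) :
    Module.finrank F ↥(Z ⊓ U F n m) = (fSet Z ∩ {j : Fin n | (j:ℕ) < m}).ncard := by
  induction m with
  | zero =>
    rw [U_zero, inf_bot_eq]
    have : fSet Z ∩ {j : Fin n | (j:ℕ) < 0} = ∅ := by
      ext j; simp
    rw [this]
    simp [finrank_bot]
  | succ m ih =>
    by_cases hm : m < n
    · rw [finrank_step Z m hm, ih]
      by_cases hmem : (⟨m, hm⟩ : Fin n) ∈ fSet Z
      · rw [if_pos hmem]
        have hset : fSet Z ∩ {j : Fin n | (j:ℕ) < m+1}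
            = insert ⟨m, hm⟩ (fSet Z ∩ {j : Fin n | (j:ℕ) < m}) := by
          ext j
          simp only [Set.mem_inter_iff, Set.mem_setOf_eq, Set.mem_insert_iff]
          constructor
          · rintro ⟨hj, hlt⟩
            rcases Nat.lt_succ_iff_lt_or_eq.mp hlt with h | h
            · exact Or.inr ⟨hj, h⟩
            · exact Or.inl (Fin.ext h)
          · rintro (h | ⟨hj, hlt⟩)
            · subst h; exact ⟨hmem, Nat.lt_succ_self m⟩
            · exact ⟨hj, Nat.lt_succ_of_lt hlt⟩
        rw [hset, Set.ncard_insert_of_notMem (by simp)]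
      · rw [if_neg hmem]
        have hset : fSet Z ∩ {j : Fin n | (j:ℕ) < m+1}
            = fSet Z ∩ {j : Fin n | (j:ℕ) < m} := by
          ext j
          simp only [Set.mem_inter_iff, Set.mem_setOf_eq]
          constructor
          · rintro ⟨hj, hlt⟩
            rcases Nat.lt_succ_iff_lt_or_eq.mp hlt with h | h
            · exact ⟨hj, h⟩
            · have hj' : j = ⟨m, hm⟩ := Fin.ext h
              exact absurd (hj' ▸ hj) hmem
          · rintro ⟨hj, hlt⟩
            exact ⟨hj, Nat.lt_succ_of_lt hlt⟩
        rw [hset]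
        omega
    · push_neg at hm
      have h1 : U F n (m+1) = U F n m := by
        rw [U_top (le_trans hm (Nat.le_succ m)), U_top hm]
      rw [h1, ih]
      congr 1
      ext j
      simp only [Set.mem_inter_iff, Set.mem_setOf_eq]
      have := j.isLt
      constructor
      · rintro ⟨hj, _⟩; exact ⟨hj, by omega⟩
      · rintro ⟨hj, _⟩; exact ⟨hj, by omega⟩

lemma ncard_fSet (Z : Submodule F (Fin n → F)) :
    (fSet Z).ncard = Module.finrank F ↥Z := by
  have h := finrank_inf_U Z n
  rw [U_top (le_refl n), inf_top_eq] at h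
  rw [h]
  congr 1
  ext j
  simp [j.isLt]


lemma reduce_lemma {X Y W : Submodule F (Fin n → F)} (hXW : X ≤ W) (hWY : W ≤ Y)
    (m : ℕ) (h : ∀ t ∈ fSet W, t ∈ fSet X ∨ (t:ℕ) ≤ m) :
    W ≤ X ⊔ (Y ⊓ U F n (m+1)) := by
  set D := X ⊔ (Y ⊓ U F n (m+1)) with hD
  have key : ∀ r : ℕ, ∀ w ∈ W, (∀ j : Fin n, r ≤ (j:ℕ) → w j = 0) → w ∈ D := by
    intro r
    induction r with
    | zero =>
      intro w _ hw
      have : w = 0 := funext fun j => hw j (Nat.zero_le _)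
      rw [this]; exact D.zero_mem
    | succ r ih =>
      intro w hwW hw
      by_cases hr : r < n
      · set i : Fin n := ⟨r, hr⟩ with hi
        by_cases h0 : w i = 0
        · refine ih w hwW fun j hj => ?_
          rcases eq_or_lt_of_le hj with heq | hlt
          · have : j = i := Fin.ext heq.symm
            rwa [this]
          · exact hw j hlt
        · have hir : (i:ℕ) = r := rfl
          have hiW : i ∈ fSet W :=
            ⟨w, hwW, h0, fun j hj => hw j (Fin.lt_def.mp hj)⟩
          rcases h i hiW with hiX | him
          · obtain ⟨x, hxX, hxr⟩ := hiX
            set w' := w - (w i / x i) • x with hw'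
            have hw'W : w' ∈ W := W.sub_mem hwW (W.smul_mem _ (hXW hxX))
            have hw'0 : ∀ j : Fin n, r ≤ (j:ℕ) → w' j = 0 := by
              intro j hj
              rcases eq_or_lt_of_le hj with heq | hlt
              · have hji : j = i := Fin.ext heq.symm
                subst hji
                simp only [hw', Pi.sub_apply, Pi.smul_apply, smul_eq_mul]
                rw [div_mul_cancel₀ _ hxr.1, sub_self]
              · simp only [hw', Pi.sub_apply, Pi.smul_apply, smul_eq_mul,
                  hw j hlt, hxr.2 j (Fin.lt_def.mpr hlt), mul_zero, sub_zero]
            have hw'D : w' ∈ D := ih w' hw'W hw'0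
            have : w = w' + (w i / x i) • x := by
              rw [hw']; abel
            rw [this]
            exact D.add_mem hw'D (D.smul_mem _ (le_sup_left (a := X) hxX))
          · refine le_sup_right (a := X) ?_
            refine Submodule.mem_inf.mpr ⟨hWY hwW, fun j hj => hw j ?_⟩
            have : (i:ℕ) ≤ m := him
            omega
      · refine ih w hwW fun j hj => ?_
        have := j.isLt
        omega
  intro w hw
  refine key n w hw fun j hj => absurd j.isLt (by omega)

lemma fSet_sup_inf {X Y : Submodule F (Fin n → F)} (hXY : X ≤ Y) (m : ℕ) :
    fSet (X ⊔ (Y ⊓ U F n (m+1))) = fSet X ∪ {t | t ∈ fSet Y ∧ (t:ℕ) ≤ m} := by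
  set D := X ⊔ (Y ⊓ U F n (m+1)) with hD
  have hDY : D ≤ Y := sup_le hXY inf_le_left
  apply Set.Subset.antisymm
  · rintro t ⟨d, hdD, hdr⟩
    have htY : t ∈ fSet Y := ⟨d, hDY hdD, hdr⟩
    by_cases htm : (t:ℕ) ≤ m
    · exact Or.inr ⟨htY, htm⟩
    · left
      obtain ⟨x, hxX, u, hu, hxu⟩ := Submodule.mem_sup.mp hdD
      have huU : u ∈ U F n (m+1) := (Submodule.mem_inf.mp hu).2
      refine ⟨x, hxX, ?_, fun j hj => ?_⟩
      · have hut : u t = 0 := huU t (by omega)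
        have : x t = d t := by
          rw [← hxu]; simp [hut]
        rw [this]; exact hdr.1
      · have huj : u j = 0 := huU j (by have := Fin.lt_def.mp hj; omega)
        have : x j = d j := by
          rw [← hxu]; simp [huj]
        rw [this]; exact hdr.2 j hj
  · rintro t (htX | ⟨htY, htm⟩)
    · exact fSet_mono le_sup_left htX
    · obtain ⟨y, hyY, hyr⟩ := htY
      refine ⟨y, le_sup_right (a := X) (Submodule.mem_inf.mpr ⟨hyY, fun j hj => ?_⟩), hyr⟩
      exact hyr.2 j (Fin.lt_def.mpr (by omega))

/-- A subspace in `[X, Y]` whose `fSet` lies below `m` (mod `fSet X`) and contains all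
of `fSet Y` below `m` must equal `X ⊔ (Y ⊓ U (m+1))`. -/
lemma sandwich {X Y W : Submodule F (Fin n → F)} (hXY : X ≤ Y) (hXW : X ≤ W) (hWY : W ≤ Y)
    (m : ℕ)
    (hsub : ∀ t ∈ fSet W, t ∈ fSet X ∨ (t:ℕ) ≤ m)
    (hsup : ∀ t ∈ fSet Y, (t:ℕ) ≤ m → t ∈ fSet W) :
    W = X ⊔ (Y ⊓ U F n (m+1)) := by
  set D := X ⊔ (Y ⊓ U F n (m+1)) with hD
  have hle : W ≤ D := reduce_lemma hXW hWY m hsub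
  have hfD : fSet D ⊆ fSet W := by
    rw [hD, fSet_sup_inf hXY m]
    rintro t (htX | ⟨htY, htm⟩)
    · exact fSet_mono hXW htX
    · exact hsup t htY htm
  have hcard : Module.finrank F ↥D ≤ Module.finrank F ↥W := by
    rw [← ncard_fSet, ← ncard_fSet]
    exact Set.ncard_le_ncard hfD (Set.toFinite _)
  exact Submodule.eq_of_le_of_finrank_le hle hcard

end Aux

open Aux in
/-- in every closed interval `[X, Y]` of the subspace lattice `B_n(q)`,
there is exactly one maximal chain whose sequence of edge labels (the label of a
covering edge `W ⋖ W'` being the unique element of `f(A(W')) \ f(A(W))`) is strictly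
increasing. -/
theorem unique_increasing_maximal_chain (F : Type*) [Field F] [Fintype F] (n : ℕ)
    (X Y : Submodule F (Fin n → F)) (hXY : X ≤ Y) :
    ∃! c : Fin (Module.finrank F Y - Module.finrank F X + 1) → Submodule F (Fin n → F),
      c 0 = X ∧ c (Fin.last _) = Y ∧
      (∀ i : Fin (Module.finrank F Y - Module.finrank F X),
        c i.castSucc < c i.succ ∧
          Module.finrank F (c i.succ) = Module.finrank F (c i.castSucc) + 1) ∧
      ∃ ℓ : Fin (Module.finrank F Y - Module.finrank F X) → Fin n, StrictMono ℓ ∧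
        ∀ i, ℓ i ∈ fSet (c i.succ) ∧ ℓ i ∉ fSet (c i.castSucc) := by
  classical
  set k := Module.finrank F Y - Module.finrank F X with hk
  have hXYf : fSet X ⊆ fSet Y := fSet_mono hXY
  have hrkXY : Module.finrank F X ≤ Module.finrank F Y := Submodule.finrank_mono hXY
  set S : Finset (Fin n) := (Set.toFinite (fSet Y \ fSet X)).toFinset with hS
  have hcard : S.card = k := by
    rw [hS, ← Set.ncard_eq_toFinset_card, Set.ncard_diff hXYf, ncard_fSet, ncard_fSet, hk]
  set ℓ : Fin k → Fin n := fun i => S.orderEmbOfFin hcard i with hℓ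
  have hℓmono : StrictMono ℓ := (S.orderEmbOfFin hcard).strictMono
  have hℓS : ∀ i, ℓ i ∈ fSet Y ∧ ℓ i ∉ fSet X := by
    intro i
    have h : ℓ i ∈ (Set.toFinite (fSet Y \ fSet X)).toFinset :=
      Finset.orderEmbOfFin_mem S hcard i
    rw [Set.Finite.mem_toFinset] at h
    exact h
  have hSrange : ∀ t, t ∈ fSet Y → t ∉ fSet X → ∃ i, ℓ i = t := by
    intro t ht htX
    have h0 : t ∈ (Set.toFinite (fSet Y \ fSet X)).toFinset := by
      rw [Set.Finite.mem_toFinset]; exact ⟨ht, htX⟩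
    have h : t ∈ (S : Set (Fin n)) := h0
    rw [← Finset.range_orderEmbOfFin S hcard] at h
    exact h
  have hℓle : ∀ i j : Fin k, ℓ i ≤ ℓ j ↔ i ≤ j := fun i j =>
    (S.orderEmbOfFin hcard).le_iff_le
  set b : Fin (k+1) → ℕ :=
    fun i => if h : (i:ℕ) = 0 then 0 else
      ((ℓ ⟨(i:ℕ)-1, by have := i.isLt; omega⟩ : Fin n) : ℕ) + 1 with hb
  set c : Fin (k+1) → Submodule F (Fin n → F) := fun i => X ⊔ (Y ⊓ U F n (b i)) with hc
  have hbval : ∀ (i : Fin (k+1)) (hne : (i:ℕ) ≠ 0) (h1 : (i:ℕ) - 1 < k),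
      b i = ((ℓ ⟨(i:ℕ)-1, h1⟩ : Fin n) : ℕ) + 1 := by
    intro i hne h1
    simp only [hb, dif_neg hne]
  have hbsucc : ∀ j : Fin k, b j.succ = ((ℓ j : Fin n) : ℕ) + 1 := by
    intro j
    rw [hbval j.succ (by simp) (by simp [Fin.val_succ])]
    have harg : (⟨((j.succ : Fin (k+1)) : ℕ) - 1, by simp [Fin.val_succ]⟩ : Fin k) = j :=
      Fin.ext (by simp [Fin.val_succ])
    rw [harg]
  have hbcast : ∀ (j : Fin k) (hj : (j:ℕ) ≠ 0) (h1 : (j:ℕ) - 1 < k),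
      b j.castSucc = ((ℓ ⟨(j:ℕ)-1, h1⟩ : Fin n) : ℕ) + 1 := by
    intro j hj h1
    rw [hbval j.castSucc (by simpa using hj) (by simpa using h1)]
    have harg : (⟨((j.castSucc : Fin (k+1)) : ℕ) - 1, by simpa using h1⟩ : Fin k)
        = ⟨(j:ℕ) - 1, h1⟩ := Fin.ext (by simp)
    rw [harg]
  have hc0 : c 0 = X := by
    have hb0 : b 0 = 0 := by simp [hb]
    show X ⊔ (Y ⊓ U F n (b 0)) = X
    rw [hb0, U_zero]
    simp
  have hccast0 : ∀ j : Fin k, (j:ℕ) = 0 → c j.castSucc = X := by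
    intro j hj0
    have hbc : b j.castSucc = 0 := by simp [hb, show j.castSucc = 0 from Fin.ext (by simp [hj0])]
    show X ⊔ (Y ⊓ U F n (b j.castSucc)) = X
    rw [hbc, U_zero]
    simp
  have hfcsucc : ∀ j : Fin k,
      fSet (c j.succ) = fSet X ∪ {t | t ∈ fSet Y ∧ (t:ℕ) ≤ ((ℓ j : Fin n) : ℕ)} := by
    intro j
    show fSet (X ⊔ (Y ⊓ U F n (b j.succ))) = _
    rw [hbsucc j]
    exact fSet_sup_inf hXY _
  have hfccast : ∀ (j : Fin k) (hj : (j:ℕ) ≠ 0) (h1 : (j:ℕ) - 1 < k),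
      fSet (c j.castSucc)
        = fSet X ∪ {t | t ∈ fSet Y ∧ (t:ℕ) ≤ ((ℓ ⟨(j:ℕ)-1, h1⟩ : Fin n) : ℕ)} := by
    intro j hj h1
    show fSet (X ⊔ (Y ⊓ U F n (b j.castSucc))) = _
    rw [hbcast j hj h1]
    exact fSet_sup_inf hXY _
  -- the key step facts for the canonical chain
  have hstep : ∀ j : Fin k,
      fSet (c j.succ) = insert (ℓ j) (fSet (c j.castSucc)) ∧
      ℓ j ∉ fSet (c j.castSucc) ∧ c j.castSucc ≤ c j.succ := by
    intro j
    have hℓjY : ℓ j ∈ fSet Y := (hℓS j).1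
    have hℓjX : ℓ j ∉ fSet X := (hℓS j).2
    by_cases hj0 : (j:ℕ) = 0
    · have hcc : c j.castSucc = X := hccast0 j hj0
      refine ⟨?_, by rw [hcc]; exact hℓjX, by rw [hcc]; exact le_sup_left⟩
      rw [hfcsucc j, hcc]
      ext t
      simp only [Set.mem_union, Set.mem_setOf_eq, Set.mem_insert_iff]
      constructor
      · rintro (htX | ⟨htY, htle⟩)
        · exact Or.inr htX
        · by_cases htX : t ∈ fSet X
          · exact Or.inr htX
          · obtain ⟨i, rfl⟩ := hSrange t htY htX
            left
            have hij : i ≤ j := (hℓle i j).mp (Fin.le_def.mpr htle)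
            have : i = j := Fin.ext (by have h1 := Fin.le_def.mp hij; omega)
            rw [this]
      · rintro (rfl | htX)
        · exact Or.inr ⟨hℓjY, le_refl _⟩
        · exact Or.inl htX
    · have h1 : (j:ℕ) - 1 < k := by have := j.isLt; omega
      have hjpj : (⟨(j:ℕ)-1, h1⟩ : Fin k) ≤ j := by rw [Fin.le_def]; simp
      have hjplt : (⟨(j:ℕ)-1, h1⟩ : Fin k) < j := by rw [Fin.lt_def]; simp; omega
      have hcc := hfccast j hj0 h1
      refine ⟨?_, ?_, ?_⟩
      · rw [hfcsucc j, hcc]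
        ext t
        simp only [Set.mem_union, Set.mem_setOf_eq, Set.mem_insert_iff]
        constructor
        · rintro (htX | ⟨htY, htle⟩)
          · exact Or.inr (Or.inl htX)
          · by_cases htX : t ∈ fSet X
            · exact Or.inr (Or.inl htX)
            · obtain ⟨i, rfl⟩ := hSrange t htY htX
              have hij : i ≤ j := (hℓle i j).mp (Fin.le_def.mpr htle)
              rcases eq_or_lt_of_le hij with heq | hlt
              · left; rw [heq]
              · right; right
                refine ⟨htY, ?_⟩
                have hijp : i ≤ (⟨(j:ℕ)-1, h1⟩ : Fin k) := by
                  rw [Fin.le_def]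
                  have := Fin.lt_def.mp hlt
                  simp
                  omega
                exact Fin.le_def.mp (hℓmono.monotone hijp)
        · rintro (rfl | htX | ⟨htY, htle⟩)
          · exact Or.inr ⟨hℓjY, le_refl _⟩
          · exact Or.inl htX
          · exact Or.inr ⟨htY, le_trans htle (Fin.le_def.mp (hℓmono.monotone hjpj))⟩
      · rw [hcc]
        rintro (htX | ⟨_, htle⟩)
        · exact hℓjX htX
        · have hlt := Fin.lt_def.mp (hℓmono hjplt)
          omega
      · show X ⊔ (Y ⊓ U F n (b j.castSucc)) ≤ X ⊔ (Y ⊓ U F n (b j.succ))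
        refine sup_le_sup_left (inf_le_inf_left Y (U_mono ?_)) X
        rw [hbcast j hj0 h1, hbsucc j]
        have := Fin.le_def.mp (hℓmono.monotone hjpj)
        omega
  have hrank : ∀ j : Fin k,
      Module.finrank F (c j.succ) = Module.finrank F (c j.castSucc) + 1 := by
    intro j
    rw [← ncard_fSet, ← ncard_fSet, (hstep j).1,
      Set.ncard_insert_of_notMem (hstep j).2.1 (Set.toFinite _)]
  have hlt : ∀ j : Fin k, c j.castSucc < c j.succ := by
    intro j
    refine lt_of_le_of_ne (hstep j).2.2 fun he => ?_
    have h := hrank j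
    rw [← he] at h
    omega
  have hclast : c (Fin.last k) = Y := by
    by_cases hk0 : k = 0
    · have hXYeq : X = Y := Submodule.eq_of_le_of_finrank_le hXY (by omega)
      have hl0 : Fin.last k = 0 := Fin.ext (by simp [hk0])
      rw [hl0, hc0, hXYeq]
    · have hne : ((Fin.last k : Fin (k+1)) : ℕ) ≠ 0 := by simp [hk0]
      have h1 : ((Fin.last k : Fin (k+1)) : ℕ) - 1 < k := by simp; omega
      have hbl := hbval (Fin.last k) hne h1
      set jm : Fin k := ⟨((Fin.last k : Fin (k+1)) : ℕ) - 1, h1⟩ with hjm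
      have hY : Y = X ⊔ (Y ⊓ U F n (((ℓ jm : Fin n) : ℕ) + 1)) := by
        refine sandwich hXY hXY (le_refl Y) _ ?_ (fun t ht _ => ht)
        intro t htY
        by_cases htX : t ∈ fSet X
        · exact Or.inl htX
        · obtain ⟨i, rfl⟩ := hSrange t htY htX
          right
          have him : i ≤ jm := by
            rw [Fin.le_def]
            have := i.isLt
            simp [hjm]
            omega
          exact Fin.le_def.mp (hℓmono.monotone him)
      show X ⊔ (Y ⊓ U F n (b (Fin.last k))) = Y
      rw [hbl]
      exact hY.symm
  refine ⟨c, ⟨hc0, hclast, fun i => ⟨hlt i, hrank i⟩,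
    ⟨ℓ, hℓmono, fun i => ⟨by rw [(hstep i).1]; exact Set.mem_insert _ _, (hstep i).2.1⟩⟩⟩, ?_⟩
  -- uniqueness
  rintro c' ⟨h0', hlast', hsteps', ℓ', hmono', hlab'⟩
  have hcmono : Monotone c' :=
    (Fin.strictMono_iff_lt_succ.mpr fun i => (hsteps' i).1).monotone
  have hrec' : ∀ j : Fin k, fSet (c' j.succ) = insert (ℓ' j) (fSet (c' j.castSucc)) := by
    intro j
    refine (Set.eq_of_subset_of_ncard_le ?_ ?_ (Set.toFinite _)).symm
    · exact Set.insert_subset (hlab' j).1 (fSet_mono (le_of_lt (hsteps' j).1))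
    · rw [Set.ncard_insert_of_notMem (hlab' j).2 (Set.toFinite _),
        ncard_fSet, ncard_fSet, (hsteps' j).2]
  have hfix' : ∀ i : Fin (k+1),
      fSet (c' i) = fSet X ∪ {t | ∃ j : Fin k, (j:ℕ) < (i:ℕ) ∧ ℓ' j = t} := by
    intro i
    induction i using Fin.induction with
    | zero =>
      rw [h0']
      have : {t : Fin n | ∃ j : Fin k, (j:ℕ) < ((0 : Fin (k+1)):ℕ) ∧ ℓ' j = t} = ∅ := by
        ext t; simp
      rw [this, Set.union_empty]
    | succ i ih =>
      rw [hrec' i, ih]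
      ext t
      simp only [Set.mem_insert_iff, Set.mem_union, Set.mem_setOf_eq, Fin.coe_castSucc,
        Fin.val_succ]
      constructor
      · rintro (rfl | htX | ⟨j, hj, rfl⟩)
        · exact Or.inr ⟨i, by omega, rfl⟩
        · exact Or.inl htX
        · exact Or.inr ⟨j, by omega, rfl⟩
      · rintro (htX | ⟨j, hj, rfl⟩)
        · exact Or.inr (Or.inl htX)
        · by_cases hji : (j:ℕ) < (i:ℕ)
          · exact Or.inr (Or.inr ⟨j, hji, rfl⟩)
          · have : j = i := Fin.ext (by omega)
            rw [this]
            exact Or.inl rfl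
  have hmemS' : ∀ j : Fin k, ℓ' j ∈ S := by
    intro j
    have hY' : ℓ' j ∈ fSet Y := by
      have h := (hlab' j).1
      have hle : c' j.succ ≤ c' (Fin.last k) := hcmono (Fin.le_last _)
      rw [← hlast']
      exact fSet_mono hle h
    have hX' : ℓ' j ∉ fSet X := by
      intro hmem
      refine (hlab' j).2 ?_
      have hle : c' 0 ≤ c' j.castSucc := hcmono (Fin.zero_le _)
      rw [← h0'] at hmem
      exact fSet_mono hle hmem
    show ℓ' j ∈ (Set.toFinite (fSet Y \ fSet X)).toFinset
    rw [Set.Finite.mem_toFinset]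
    exact ⟨hY', hX'⟩
  have hℓ'eq : ℓ' = ℓ := by
    rw [Finset.orderEmbOfFin_unique hcard hmemS' hmono']
  rw [hℓ'eq] at hfix'
  funext i
  induction i using Fin.cases with
  | zero => rw [h0', hc0]
  | succ j =>
    have hXle : X ≤ c' j.succ := by
      rw [← h0']
      exact hcmono (Fin.zero_le _)
    have hYge : c' j.succ ≤ Y := by
      rw [← hlast']
      exact hcmono (Fin.le_last _)
    have hWD : c' j.succ = X ⊔ (Y ⊓ U F n (((ℓ j : Fin n) : ℕ) + 1)) := by
      refine sandwich hXY hXle hYge _ ?_ ?_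
      · intro t ht
        rw [hfix' j.succ] at ht
        rcases ht with htX | ⟨j', hj', rfl⟩
        · exact Or.inl htX
        · right
          have hj'j : j' ≤ j := by
            rw [Fin.le_def]
            rw [Fin.val_succ] at hj'
            omega
          exact Fin.le_def.mp (hℓmono.monotone hj'j)
      · intro t htY htm
        rw [hfix' j.succ]
        by_cases htX : t ∈ fSet X
        · exact Or.inl htX
        · obtain ⟨i', rfl⟩ := hSrange t htY htX
          right
          have hi'j : i' ≤ j := (hℓle i' j).mp (Fin.le_def.mpr htm)
          exact ⟨i', by rw [Fin.val_succ]; have := Fin.le_def.mp hi'j; omega, rfl⟩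
    rw [hWD]
    show _ = X ⊔ (Y ⊓ U F n (b j.succ))
    rw [hbsucc j]
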